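/- Let x = (x₁,…,x_d) be a partition recording intersection sizes of a k-set with d imprimitivity classes each of size c, so Σxᵢ = k and v = cd. The orbit design D* = (P, B^{S_c ≀ S_d}) is a 2-design if and only if Σ xᵢ(xᵢ−1) = k(k−1)(c−1)/(v−1). -/

import Mathlib

open Finset Equiv

namespace CP10

variable {c d : ℕ}

def sh (π : Perm (Fin d)) (τ : Fin d → Perm (Fin c)) :
    (Fin d × Fin c) ≃ (Fin d × Fin c) := Equiv.prodShear π τ

@[simp] lemma sh_apply (π : Perm (Fin d)) (τ : Fin d → Perm (Fin c)) (x : Fin d × Fin c) :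
    sh π τ x = (π x.1, τ x.1 x.2) := rfl

lemma sh_symm (π : Perm (Fin d)) (τ : Fin d → Perm (Fin c)) :
    (sh π τ).symm = sh π⁻¹ (fun i => (τ (π⁻¹ i))⁻¹) := by
  apply Equiv.ext; intro x
  rw [Equiv.symm_apply_eq]
  simp

def inOrbit (B C : Finset (Fin d × Fin c)) : Prop :=
  ∃ (π : Perm (Fin d)) (τ : Fin d → Perm (Fin c)),
    C = B.image (fun x => (π x.1, τ x.1 x.2))

instance (B C : Finset (Fin d × Fin c)) : Decidable (inOrbit B C) := by
  unfold inOrbit; infer_instance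

def Orb (B : Finset (Fin d × Fin c)) : Finset (Finset (Fin d × Fin c)) :=
  univ.filter (inOrbit B)

def n (B : Finset (Fin d × Fin c)) (p q : Fin d × Fin c) : ℕ :=
  ((Orb B).filter (fun C => p ∈ C ∧ q ∈ C)).card

lemma self_mem_orb (B : Finset (Fin d × Fin c)) : B ∈ Orb B := by
  refine mem_filter.2 ⟨mem_univ _, 1, fun _ => 1, ?_⟩
  simp

lemma inOrbit_image {B C : Finset (Fin d × Fin c)} (π : Perm (Fin d))
    (τ : Fin d → Perm (Fin c)) (h : inOrbit B C) : inOrbit B (C.image (sh π τ)) := by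
  obtain ⟨π₁, τ₁, rfl⟩ := h
  refine ⟨π * π₁, fun i => τ (π₁ i) * τ₁ i, ?_⟩
  rw [Finset.image_image]
  congr 1

lemma mem_orb_image {B C : Finset (Fin d × Fin c)} (π : Perm (Fin d))
    (τ : Fin d → Perm (Fin c)) (h : C ∈ Orb B) : C.image (sh π τ) ∈ Orb B :=
  mem_filter.2 ⟨mem_univ _, inOrbit_image π τ (mem_filter.1 h).2⟩

lemma image_symm_image (σ : (Fin d × Fin c) ≃ (Fin d × Fin c))
    (C : Finset (Fin d × Fin c)) : (C.image σ).image σ.symm = C := by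
  rw [Finset.image_image]
  simp

lemma n_sh (B : Finset (Fin d × Fin c)) (π : Perm (Fin d)) (τ : Fin d → Perm (Fin c))
    (p q : Fin d × Fin c) : n B p q = n B (sh π τ p) (sh π τ q) := by
  apply Finset.card_nbij' (fun C => C.image (sh π τ)) (fun C => C.image ((sh π τ).symm))
  · intro C hC
    rw [Finset.mem_coe, mem_filter] at hC ⊢
    exact ⟨mem_orb_image π τ hC.1, mem_image_of_mem _ hC.2.1, mem_image_of_mem _ hC.2.2⟩
  · intro C hC
    rw [Finset.mem_coe, mem_filter] at hC ⊢
    refine ⟨?_, ?_, ?_⟩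
    · rw [sh_symm]; exact mem_orb_image _ _ hC.1
    · have := mem_image_of_mem (sh π τ).symm hC.2.1
      rwa [Equiv.symm_apply_apply] at this
    · have := mem_image_of_mem (sh π τ).symm hC.2.2
      rwa [Equiv.symm_apply_apply] at this
  · intro C _; exact image_symm_image _ C
  · intro C _
    dsimp only
    rw [Finset.image_image]
    simp

lemma exists_perm_pair {α : Type*} [DecidableEq α] {a b a' b' : α}
    (h : a ≠ b) (h' : a' ≠ b') : ∃ σ : Perm α, σ a = a' ∧ σ b = b' := by
  refine ⟨(Equiv.swap (Equiv.swap a a' b) b') * (Equiv.swap a a'), ?_, ?_⟩ <;>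
  · simp only [Perm.mul_apply, Equiv.swap_apply_def]
    split_ifs <;> simp_all

lemma exists_sh_pair {p q p' q' : Fin d × Fin c} (hpq : p ≠ q) (hpq' : p' ≠ q')
    (ht : p.1 = q.1 ↔ p'.1 = q'.1) :
    ∃ (π : Perm (Fin d)) (τ : Fin d → Perm (Fin c)), sh π τ p = p' ∧ sh π τ q = q' := by
  by_cases h1 : p.1 = q.1
  · have h1' : p'.1 = q'.1 := ht.mp h1
    have h2 : p.2 ≠ q.2 := fun h => hpq (Prod.ext h1 h)
    have h2' : p'.2 ≠ q'.2 := fun h => hpq' (Prod.ext h1' h)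
    obtain ⟨σ, hσ1, hσ2⟩ := exists_perm_pair h2 h2'
    refine ⟨Equiv.swap p.1 p'.1, fun i => if i = p.1 then σ else 1, ?_, ?_⟩
    · rw [sh_apply, if_pos rfl, hσ1, Equiv.swap_apply_left]
    · rw [sh_apply, if_pos h1.symm, hσ2, ← h1, Equiv.swap_apply_left, h1']
  · have h1' : p'.1 ≠ q'.1 := fun h => h1 (ht.mpr h)
    obtain ⟨π, hπ1, hπ2⟩ := exists_perm_pair h1 h1'
    refine ⟨π, fun i => if i = p.1 then Equiv.swap p.2 p'.2 else
      if i = q.1 then Equiv.swap q.2 q'.2 else 1, ?_, ?_⟩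
    · rw [sh_apply, if_pos rfl, hπ1, Equiv.swap_apply_left]
    · rw [sh_apply, if_neg (Ne.symm h1), if_pos rfl, hπ2, Equiv.swap_apply_left]

lemma n_eq (B : Finset (Fin d × Fin c)) {p q p' q' : Fin d × Fin c}
    (hpq : p ≠ q) (hpq' : p' ≠ q') (ht : (p.1 = q.1 ↔ p'.1 = q'.1)) :
    n B p q = n B p' q' := by
  obtain ⟨π, τ, h1, h2⟩ := exists_sh_pair hpq hpq' ht
  rw [n_sh B π τ p q, h1, h2]

/-- pairs of distinct points of `S` whose first components satisfy `R`. -/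
def tR (R : Fin d → Fin d → Prop) [DecidableRel R] (S : Finset (Fin d × Fin c)) :
    Finset ((Fin d × Fin c) × (Fin d × Fin c)) :=
  S.offDiag.filter (fun ab => R ab.1.1 ab.2.1)

lemma tR_card_image (R : Fin d → Fin d → Prop) [DecidableRel R]
    (π : Perm (Fin d)) (τ : Fin d → Perm (Fin c))
    (hR : ∀ a b, R (π a) (π b) ↔ R a b) (S : Finset (Fin d × Fin c)) :
    (tR R (S.image (sh π τ))).card = (tR R S).card := by
  apply Finset.card_nbij' (fun ab => (((sh π τ).symm ab.1), ((sh π τ).symm ab.2)))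
    (fun ab => ((sh π τ ab.1), (sh π τ ab.2)))
  · rintro ⟨a, b⟩ hab
    simp only [tR, Finset.mem_coe, mem_filter, Finset.mem_offDiag] at hab ⊢
    obtain ⟨⟨ha, hb, hne⟩, hr⟩ := hab
    rw [Finset.mem_image] at ha hb
    obtain ⟨a₀, ha₀, rfl⟩ := ha
    obtain ⟨b₀, hb₀, rfl⟩ := hb
    simp only [Equiv.symm_apply_apply]
    refine ⟨⟨ha₀, hb₀, fun h => hne (by rw [h])⟩, ?_⟩
    simpa only [sh_apply, hR] using hr
  · rintro ⟨a, b⟩ hab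
    simp only [tR, Finset.mem_coe, mem_filter, Finset.mem_offDiag] at hab ⊢
    obtain ⟨⟨ha, hb, hne⟩, hr⟩ := hab
    exact ⟨⟨mem_image_of_mem _ ha, mem_image_of_mem _ hb,
      fun h => hne ((sh π τ).injective h)⟩, by simpa only [sh_apply, hR] using hr⟩
  · rintro ⟨a, b⟩ _; simp
  · rintro ⟨a, b⟩ _
    simp only [Prod.mk.injEq]
    exact ⟨(sh π τ).symm_apply_apply a, (sh π τ).symm_apply_apply b⟩

lemma tR_card_decomp (S : Finset (Fin d × Fin c)) :
    (tR (· = ·) S).card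
      = ∑ i : Fin d, ((S.filter (fun x => x.1 = i)).card * (S.filter (fun x => x.1 = i)).card
          - (S.filter (fun x => x.1 = i)).card) := by
  have key : tR (· = ·) S = univ.biUnion
      (fun i : Fin d => ((S.filter (fun x => x.1 = i)).offDiag)) := by
    ext ⟨a, b⟩
    simp only [tR, mem_filter, Finset.mem_offDiag, Finset.mem_biUnion, mem_univ, true_and]
    constructor
    · rintro ⟨⟨ha, hb, hne⟩, hr⟩
      exact ⟨a.1, ⟨ha, rfl⟩, ⟨hb, hr.symm⟩, hne⟩
    · rintro ⟨i, ⟨ha, hai⟩, ⟨hb, hbi⟩, hne⟩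
      exact ⟨⟨ha, hb, hne⟩, by rw [hai, hbi]⟩
  rw [key, Finset.card_biUnion]
  · exact Finset.sum_congr rfl fun i _ => Finset.offDiag_card _
  · intro i _ j _ hij
    simp only [Finset.disjoint_left]
    rintro ⟨a, b⟩ ha hb
    rw [Finset.mem_offDiag] at ha hb
    exact hij ((mem_filter.1 ha.1).2.symm.trans (mem_filter.1 hb.1).2)

lemma filter_fst_card (i : Fin d) :
    ((univ : Finset (Fin d × Fin c)).filter (fun x => x.1 = i)).card = c := by
  have : (univ : Finset (Fin d × Fin c)).filter (fun x => x.1 = i) = {i} ×ˢ univ := by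
    ext ⟨a, b⟩
    simp [Finset.mem_product, eq_comm]
  rw [this, Finset.card_product]
  simp

lemma tR_univ_eq_card :
    (tR (· = ·) (univ : Finset (Fin d × Fin c))).card = d * (c * c - c) := by
  rw [tR_card_decomp]
  simp [filter_fst_card, Finset.sum_const, Finset.card_univ, mul_comm]

lemma tR_split (S : Finset (Fin d × Fin c)) :
    (tR (· = ·) S).card + (tR (· ≠ ·) S).card = S.card * S.card - S.card := by
  have := Finset.card_filter_add_card_filter_not
    (s := S.offDiag) (p := fun ab => ab.1.1 = ab.2.1)
  rw [Finset.offDiag_card] at this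
  exact this

lemma sum_n_tR (B : Finset (Fin d × Fin c)) (R : Fin d → Fin d → Prop) [DecidableRel R]
    (hR : ∀ (π : Perm (Fin d)) (a b : Fin d), R (π a) (π b) ↔ R a b) :
    ∑ pq ∈ tR R (univ : Finset (Fin d × Fin c)), n B pq.1 pq.2
      = (Orb B).card * (tR R B).card := by
  have step1 : ∑ pq ∈ tR R (univ : Finset (Fin d × Fin c)), n B pq.1 pq.2
      = ∑ C ∈ Orb B, ((tR R (univ : Finset (Fin d × Fin c))).filter
          (fun pq => pq.1 ∈ C ∧ pq.2 ∈ C)).card := by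
    simp only [n, Finset.card_filter]
    exact Finset.sum_comm
  rw [step1]
  have step2 : ∀ C ∈ Orb B, ((tR R (univ : Finset (Fin d × Fin c))).filter
      (fun pq => pq.1 ∈ C ∧ pq.2 ∈ C)).card = (tR R B).card := by
    intro C hC
    have hfc : (tR R (univ : Finset (Fin d × Fin c))).filter
        (fun pq => pq.1 ∈ C ∧ pq.2 ∈ C) = tR R C := by
      ext ⟨a, b⟩
      simp only [tR, mem_filter, Finset.mem_offDiag, mem_univ, true_and]
      tauto
    rw [hfc]
    obtain ⟨π, τ, rfl⟩ := (mem_filter.1 hC).2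
    exact tR_card_image R π τ (hR π) B
  rw [Finset.sum_congr rfl step2, Finset.sum_const, smul_eq_mul]

lemma cast_mul_pred (y : ℕ) : ((y * y - y : ℕ) : ℚ) = (y : ℚ) * ((y : ℚ) - 1) := by
  cases y with
  | zero => simp
  | succ m =>
    have h : m + 1 ≤ (m + 1) * (m + 1) := Nat.le_mul_of_pos_left _ (Nat.succ_pos m)
    rw [Nat.cast_sub h]
    push_cast
    ring

end CP10

set_option maxHeartbeats 1000000 in
/-- Cameron–Praeger criterion (2-designs): with points `Fin d × Fin c` partitioned into the
`d` classes `{i} × Fin c`, a `k`-set `B` with intersection sizes `xᵢ = |B ∩ Δᵢ|`, the orbit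
design `(P, B^{S_c ≀ S_d})` is a 2-design iff `Σ xᵢ(xᵢ−1) = k(k−1)(c−1)/(v−1)`, `v = cd`. -/
theorem stmt_10 (c d k : ℕ) (hc : 1 < c) (hd : 1 < d)
    (B : Finset (Fin d × Fin c)) (hB : B.card = k) :
    (∃ lam : ℕ, ∀ p q : Fin d × Fin c, p ≠ q →
        Nat.card {C : Finset (Fin d × Fin c) //
          (∃ (π : Equiv.Perm (Fin d)) (τ : Fin d → Equiv.Perm (Fin c)),
            C = B.image (fun x => (π x.1, τ x.1 x.2))) ∧ p ∈ C ∧ q ∈ C} = lam) ↔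
      (∑ i : Fin d, (((B.filter (fun x => x.1 = i)).card : ℚ) *
          (((B.filter (fun x => x.1 = i)).card : ℚ) - 1)) =
        (k : ℚ) * ((k : ℚ) - 1) * ((c : ℚ) - 1) / ((c : ℚ) * (d : ℚ) - 1)) := by
  classical
  -- identification of Nat.card with the filtered count `n`
  have hn : ∀ p q : Fin d × Fin c,
      Nat.card {C : Finset (Fin d × Fin c) //
        (∃ (π : Equiv.Perm (Fin d)) (τ : Fin d → Equiv.Perm (Fin c)),
          C = B.image (fun x => (π x.1, τ x.1 x.2))) ∧ p ∈ C ∧ q ∈ C} = CP10.n B p q := by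
    intro p q
    rw [Nat.card_eq_fintype_card, Fintype.card_subtype]
    unfold CP10.n CP10.Orb
    rw [Finset.filter_filter]
    apply Finset.card_nbij' id id
    · intro C hC
      rw [Finset.mem_coe, Finset.mem_filter] at hC ⊢
      exact ⟨hC.1, hC.2⟩
    · intro C hC
      rw [Finset.mem_coe, Finset.mem_filter] at hC ⊢
      exact ⟨hC.1, hC.2⟩
    · intro C _; rfl
    · intro C _; rfl
  -- sample pairs
  set pE : Fin d × Fin c := (⟨0, by omega⟩, ⟨0, by omega⟩) with hpEdef
  set qE : Fin d × Fin c := (⟨0, by omega⟩, ⟨1, by omega⟩) with hqEdef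
  set qN : Fin d × Fin c := (⟨1, by omega⟩, ⟨0, by omega⟩) with hqNdef
  have hEne : pE ≠ qE := by simp [hpEdef, hqEdef, Prod.ext_iff, Fin.ext_iff]
  have hNne : pE ≠ qN := by simp [hpEdef, hqNdef, Prod.ext_iff, Fin.ext_iff]
  have hEfst : pE.1 = qE.1 := rfl
  have hNfst : pE.1 ≠ qN.1 := by simp [hpEdef, hqNdef, Fin.ext_iff]
  set lamE := CP10.n B pE qE with hlamE
  set lamN := CP10.n B pE qN with hlamN
  set N := (CP10.Orb B).card with hN
  set TEq := (CP10.tR (· = ·) B).card with hTEq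
  set TNe := (CP10.tR (· ≠ ·) B).card with hTNe
  set MEq := (CP10.tR (· = ·) (Finset.univ : Finset (Fin d × Fin c))).card with hMEq
  set MNe := (CP10.tR (· ≠ ·) (Finset.univ : Finset (Fin d × Fin c))).card with hMNe
  -- the two constancy/counting identities
  have hsumE : MEq * lamE = N * TEq := by
    have h1 := CP10.sum_n_tR B (· = ·) (fun π a b => by simp)
    have h2 : ∀ pq ∈ CP10.tR (· = ·) (Finset.univ : Finset (Fin d × Fin c)),
        CP10.n B pq.1 pq.2 = lamE := by
      intro pq hpq
      rw [CP10.tR, Finset.mem_filter, Finset.mem_offDiag] at hpq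
      exact CP10.n_eq B hpq.1.2.2 hEne (iff_of_true hpq.2 hEfst)
    rw [Finset.sum_congr rfl h2, Finset.sum_const, smul_eq_mul] at h1
    exact h1
  have hsumN : MNe * lamN = N * TNe := by
    have h1 := CP10.sum_n_tR B (· ≠ ·) (fun π a b => by simp)
    have h2 : ∀ pq ∈ CP10.tR (· ≠ ·) (Finset.univ : Finset (Fin d × Fin c)),
        CP10.n B pq.1 pq.2 = lamN := by
      intro pq hpq
      rw [CP10.tR, Finset.mem_filter, Finset.mem_offDiag] at hpq
      exact CP10.n_eq B hpq.1.2.2 hNne (iff_of_false hpq.2 hNfst)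
    rw [Finset.sum_congr rfl h2, Finset.sum_const, smul_eq_mul] at h1
    exact h1
  -- cardinalities
  have hucard : (Finset.univ : Finset (Fin d × Fin c)).card = d * c := by
    simp [Finset.card_univ]
  have hMval : MEq = d * (c * c - c) := CP10.tR_univ_eq_card
  have hMsplit : MEq + MNe = (d * c) * (d * c) - d * c := by
    have := CP10.tR_split (Finset.univ : Finset (Fin d × Fin c))
    rwa [hucard] at this
  have hTsplit : TEq + TNe = k * k - k := by
    have := CP10.tR_split B
    rwa [hB] at this
  have hNpos : 0 < N := Finset.card_pos.2 ⟨B, CP10.self_mem_orb B⟩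
  clear_value lamE lamN N TEq TNe MEq MNe
  -- rational versions
  have hc1 : ((c : ℚ) - 1) ≠ 0 := by
    have : (1 : ℚ) < (c : ℚ) := by exact_mod_cast hc
    intro h; nlinarith
  have hcd1 : ((c : ℚ) * (d : ℚ) - 1) ≠ 0 := by
    have h1 : (1 : ℚ) ≤ (c : ℚ) := by exact_mod_cast hc.le
    have h2 : (2 : ℚ) ≤ (d : ℚ) := by exact_mod_cast hd
    have hc2 : (2 : ℚ) ≤ (c : ℚ) := by exact_mod_cast hc
    intro h; nlinarith
  have hcdc : ((c : ℚ) * (d : ℚ) - (c : ℚ)) ≠ 0 := by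
    have hc0 : (0 : ℚ) < (c : ℚ) := by exact_mod_cast (by omega : 0 < c)
    have h2 : (2 : ℚ) ≤ (d : ℚ) := by exact_mod_cast hd
    intro h; nlinarith
  have hdc0 : ((d : ℚ) * (c : ℚ) * ((c : ℚ) * (d : ℚ) - 1)) ≠ 0 := by
    have hc0 : (0 : ℚ) < (c : ℚ) := by exact_mod_cast (by omega : 0 < c)
    have hd0 : (0 : ℚ) < (d : ℚ) := by exact_mod_cast (by omega : 0 < d)
    exact mul_ne_zero (mul_ne_zero (ne_of_gt hd0) (ne_of_gt hc0)) hcd1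
  have hNQ : (N : ℚ) ≠ 0 := by exact_mod_cast hNpos.ne'
  have eE : (MEq : ℚ) * (lamE : ℚ) = (N : ℚ) * (TEq : ℚ) := by exact_mod_cast hsumE
  have eN : (MNe : ℚ) * (lamN : ℚ) = (N : ℚ) * (TNe : ℚ) := by exact_mod_cast hsumN
  have hMvalQ : (MEq : ℚ) = (d : ℚ) * ((c : ℚ) * (c : ℚ) - (c : ℚ)) := by
    have hle : c ≤ c * c := Nat.le_mul_of_pos_left c (by omega : 0 < c)
    rw [hMval, Nat.cast_mul, Nat.cast_sub hle]
    push_cast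
    ring
  have hMsplitQ : (MEq : ℚ) + (MNe : ℚ)
      = ((d : ℚ) * (c : ℚ)) * ((d : ℚ) * (c : ℚ)) - (d : ℚ) * (c : ℚ) := by
    have hle : d * c ≤ (d * c) * (d * c) :=
      Nat.le_mul_of_pos_left _ (Nat.mul_pos ((by omega : 0 < d)) ((by omega : 0 < c)))
    have h2 := congrArg (fun m : ℕ => (m : ℚ)) hMsplit
    simp only [Nat.cast_add, Nat.cast_sub hle] at h2
    push_cast at h2
    linarith
  have hTsplitQ : (TEq : ℚ) + (TNe : ℚ) = (k : ℚ) * (k : ℚ) - (k : ℚ) := by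
    have hle : k ≤ k * k := by
      rcases Nat.eq_zero_or_pos k with h | h
      · simp [h]
      · exact Nat.le_mul_of_pos_left _ h
    have h2 := congrArg (fun m : ℕ => (m : ℚ)) hTsplit
    simp only [Nat.cast_add, Nat.cast_sub hle] at h2
    push_cast at h2
    linarith
  -- statement sum equals TEq
  have hQ : (∑ i : Fin d, (((B.filter (fun x => x.1 = i)).card : ℚ) *
      (((B.filter (fun x => x.1 = i)).card : ℚ) - 1))) = (TEq : ℚ) := by
    rw [hTEq, CP10.tR_card_decomp B, Nat.cast_sum]
    exact (Finset.sum_congr rfl fun i _ => (CP10.cast_mul_pred _).symm)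
  rw [hQ]
  constructor
  · rintro ⟨lam, hlam⟩
    have h1 : lamE = lam := by rw [hlamE, ← hn pE qE]; exact hlam pE qE hEne
    have h2 : lamN = lam := by rw [hlamN, ← hn pE qN]; exact hlam pE qN hNne
    have hEeqN : (lamN : ℚ) = (lamE : ℚ) := by rw [h1, h2]
    rw [eq_div_iff hcd1]
    apply mul_left_cancel₀ hNQ
    rw [show (N : ℚ) * ((TEq : ℚ) * ((c : ℚ) * (d : ℚ) - 1))
        = (N : ℚ) * (TEq : ℚ) * ((c : ℚ) * (d : ℚ) - 1) by ring]
    linear_combination (lamE : ℚ) * ((c : ℚ) * (d : ℚ) - 1) * hMvalQ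
      - (lamE : ℚ) * ((c : ℚ) - 1) * hMsplitQ
      + ((c : ℚ) - (c : ℚ) * (d : ℚ)) * eE + ((c : ℚ) - 1) * eN
      + (N : ℚ) * ((c : ℚ) - 1) * hTsplitQ
      - ((c : ℚ) - 1) * (MNe : ℚ) * hEeqN
  · intro hS
    refine ⟨lamE, ?_⟩
    intro p q hpq
    rw [hn p q]
    by_cases hfst : p.1 = q.1
    · rw [hlamE]; exact CP10.n_eq B hpq hEne (iff_of_true hfst hEfst)
    · rw [CP10.n_eq B hpq hNne (iff_of_false hfst hNfst), ← hlamN]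
      -- show lamN = lamE
      have hT1 : (TEq : ℚ) * ((c : ℚ) * (d : ℚ) - 1)
          = (k : ℚ) * ((k : ℚ) - 1) * ((c : ℚ) - 1) := by
        rw [hS, div_mul_cancel₀ _ hcd1]
      have f1 : (lamE : ℚ) * ((d : ℚ) * (c : ℚ) * ((c : ℚ) * (d : ℚ) - 1)) * ((c : ℚ) - 1)
          = (N : ℚ) * ((k : ℚ) * ((k : ℚ) - 1)) * ((c : ℚ) - 1) := by
        linear_combination ((c : ℚ) * (d : ℚ) - 1) * eE + (N : ℚ) * hT1
          - (lamE : ℚ) * ((c : ℚ) * (d : ℚ) - 1) * hMvalQ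
      have f2 : (lamN : ℚ) * ((d : ℚ) * (c : ℚ) * ((c : ℚ) * (d : ℚ) - 1))
            * ((c : ℚ) * (d : ℚ) - (c : ℚ))
          = (N : ℚ) * ((k : ℚ) * ((k : ℚ) - 1)) * ((c : ℚ) * (d : ℚ) - (c : ℚ)) := by
        linear_combination ((c : ℚ) * (d : ℚ) - 1) * eN
          - (lamN : ℚ) * ((c : ℚ) * (d : ℚ) - 1) * hMsplitQ
          + (lamN : ℚ) * ((c : ℚ) * (d : ℚ) - 1) * hMvalQ
          + (N : ℚ) * ((c : ℚ) * (d : ℚ) - 1) * hTsplitQ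
          - (N : ℚ) * hT1
      have g1 := mul_right_cancel₀ hc1 f1
      have g2 := mul_right_cancel₀ hcdc f2
      have : (lamN : ℚ) * ((d : ℚ) * (c : ℚ) * ((c : ℚ) * (d : ℚ) - 1))
          = (lamE : ℚ) * ((d : ℚ) * (c : ℚ) * ((c : ℚ) * (d : ℚ) - 1)) := by
        rw [g1, g2]
      have hfin : (lamN : ℚ) = (lamE : ℚ) := mul_right_cancel₀ hdc0 this
      exact_mod_cast hfin
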